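/- arXiv:0807.4875 — 4 statements merged into one kernel-verified Lean document; each statement's English description precedes it below -/
import Mathlib

section
/- For h = su(2) := span(P₅,P₆,P₇) ⊂ Λ²(ℝ⁸), the space K(h) of algebraic curvature tensors with values in h is non-trivial: there exists a non-zero quadrilinear map R : (ℝ⁸)⁴ → ℝ with R(X,Y,Z,V) = −R(Y,X,Z,V), with (Z,V) ↦ R(X,Y,Z,V) lying in h for all X,Y, and satisfying the first Bianchi identity R(X,Y,Z,V)+R(Y,Z,X,V)+R(Z,X,Y,V) = 0. -/
open scoped BigOperators
open Matrix

noncomputable section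
namespace Spin7Paper

/-- ℝ⁸ -/
abbrev V8 := Fin 8 → ℝ

/-- The space Λᵏ(ℝ⁸) of k-forms. -/
abbrev AltForm (k : ℕ) := AlternatingMap ℝ V8 ℝ (Fin k)

/-- standard basis vector -/
def eVec (i : Fin 8) : V8 := Pi.single i 1

/-- basis k-form e_{i₁…i_k} -/
def eForm {k : ℕ} (idx : Fin k → Fin 8) : AltForm k :=
  (Matrix.detRowAlternating : AlternatingMap ℝ (Fin k → ℝ) ℝ (Fin k)).compLinearMap
    (LinearMap.funLeft ℝ ℝ idx)

def e2 (i j : Fin 8) : AltForm 2 := eForm ![i, j]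
def e3 (i j k : Fin 8) : AltForm 3 := eForm ![i, j, k]
def e4 (i j k l : Fin 8) : AltForm 4 := eForm ![i, j, k, l]

/-- the 2-forms P₁,…,P₈ (note: indices here are 0-based). -/
def P1 : AltForm 2 := e2 2 4 + e2 3 5
def P2 : AltForm 2 := e2 2 5 - e2 3 4
def P3 : AltForm 2 := e2 0 4 + e2 1 5
def P4 : AltForm 2 := e2 0 5 - e2 1 4
def P5 : AltForm 2 := e2 0 2 + e2 1 3
def P6 : AltForm 2 := e2 0 3 - e2 1 2
def P7 : AltForm 2 := e2 0 1 - e2 2 3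
def P8 : AltForm 2 := e2 2 3 - e2 4 5
def Q1 : AltForm 2 := (2 : ℝ) • e2 0 6 - e2 2 4 + e2 3 5
def Q2 : AltForm 2 := (2 : ℝ) • e2 1 6 + e2 2 5 + e2 3 4
def Q3 : AltForm 2 := (2 : ℝ) • e2 2 6 + e2 0 4 - e2 1 5
def Q4 : AltForm 2 := (2 : ℝ) • e2 3 6 - e2 0 5 - e2 1 4
def Q5 : AltForm 2 := (2 : ℝ) • e2 4 6 - e2 0 2 + e2 1 3
def Q6 : AltForm 2 := (2 : ℝ) • e2 5 6 + e2 0 3 + e2 1 2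
def S1 : AltForm 2 := e2 0 7 - e2 1 6
def S2 : AltForm 2 := e2 1 7 + e2 0 6
def S3 : AltForm 2 := e2 2 7 - e2 3 6
def S4 : AltForm 2 := e2 3 7 + e2 2 6
def S5 : AltForm 2 := e2 4 7 - e2 5 6
def S6 : AltForm 2 := e2 5 7 + e2 4 6
def S7 : AltForm 2 := e2 6 7 - e2 4 5

/-- the Lie algebra spin(7) as the span of the 21 two-forms above -/
def spin7 : Submodule ℝ (AltForm 2) :=
  Submodule.span ℝ {P1, P2, P3, P4, P5, P6, P7, P8, Q1, Q2, Q3, Q4, Q5, Q6,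
    S1, S2, S3, S4, S5, S6, S7}

/-- the Spin(7) fundamental 4-form Φ -/
def Phi : AltForm 4 :=
  e4 0 1 6 7 + e4 2 3 6 7 + e4 4 5 6 7 + e4 1 3 5 7 - e4 1 2 4 7 - e4 0 3 4 7
    - e4 0 2 5 7 + e4 0 1 2 3 + e4 0 1 4 5 + e4 2 3 4 5 + e4 0 2 4 6 - e4 0 3 5 6
    - e4 1 2 5 6 - e4 1 3 4 6

/-- the skew-symmetric endomorphism of ℝ⁸ associated with a 2-form:
`x ↦ Σ_{i<j} ω_{ij} (⟨e_i,x⟩ e_j − ⟨e_j,x⟩ e_i)`. -/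
def toEnd (ω : AltForm 2) : V8 →ₗ[ℝ] V8 where
  toFun x := fun j => ∑ i, ω ![eVec i, eVec j] * x i
  map_add' x y := by
    funext j
    simp [mul_add, Finset.sum_add_distrib]
  map_smul' c x := by
    funext j
    simp only [Pi.smul_apply, smul_eq_mul, RingHom.id_apply, Finset.mul_sum]
    exact Finset.sum_congr rfl fun i _ => by ring

/-- the action of a skew-symmetric endomorphism `A` on k-forms:
`(A·τ)(X₁,…,X_k) = −Σ_m τ(X₁,…,A X_m,…,X_k)`. -/
def actEnd {k : ℕ} (A : V8 →ₗ[ℝ] V8) (τ : AltForm k) : (Fin k → V8) → ℝ :=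
  fun X => -∑ m, τ (Function.update X m (A (X m)))

lemma toEnd_add (ω η : AltForm 2) : toEnd (ω + η) = toEnd ω + toEnd η := by
  apply LinearMap.ext; intro x
  funext j
  simp [toEnd, add_mul, Finset.sum_add_distrib]

lemma toEnd_smul (c : ℝ) (ω : AltForm 2) : toEnd (c • ω) = c • toEnd ω := by
  apply LinearMap.ext; intro x
  funext j
  simp only [toEnd, AlternatingMap.smul_apply, smul_eq_mul, LinearMap.coe_mk, AddHom.coe_mk,
    LinearMap.smul_apply, Pi.smul_apply, Finset.mul_sum]
  exact Finset.sum_congr rfl fun i _ => by ring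

lemma toEnd_zero : toEnd (0 : AltForm 2) = 0 := by
  apply LinearMap.ext; intro x
  funext j
  simp [toEnd]

lemma actEnd_add {k : ℕ} (A B : V8 →ₗ[ℝ] V8) (τ : AltForm k) (X : Fin k → V8) :
    actEnd (A + B) τ X = actEnd A τ X + actEnd B τ X := by
  simp only [actEnd, LinearMap.add_apply]
  rw [← neg_add, ← Finset.sum_add_distrib]
  congr 1
  exact Finset.sum_congr rfl fun m _ => (τ.toMultilinearMap.map_update_add X m _ _)

lemma actEnd_smul {k : ℕ} (c : ℝ) (A : V8 →ₗ[ℝ] V8) (τ : AltForm k) (X : Fin k → V8) :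
    actEnd (c • A) τ X = c * actEnd A τ X := by
  simp only [actEnd, LinearMap.smul_apply, mul_neg, Finset.mul_sum]
  congr 1
  exact Finset.sum_congr rfl fun m _ => by
    simpa using (τ.toMultilinearMap.map_update_smul X m c (A (X m)))

lemma actEnd_zero {k : ℕ} (τ : AltForm k) (X : Fin k → V8) :
    actEnd (0 : V8 →ₗ[ℝ] V8) τ X = 0 := by
  simp [actEnd, MultilinearMap.map_update_zero]

/-- the isotropy algebra in spin(7) of a 3-form T -/
def isoSub (T : AltForm 3) : Submodule ℝ (AltForm 2) where
  carrier := {ω | ω ∈ spin7 ∧ ∀ X, actEnd (toEnd ω) T X = 0}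
  zero_mem' := ⟨spin7.zero_mem, fun X => by rw [toEnd_zero]; exact actEnd_zero T X⟩
  add_mem' := by
    rintro a b ⟨ha1, ha2⟩ ⟨hb1, hb2⟩
    exact ⟨spin7.add_mem ha1 hb1, fun X => by
      rw [toEnd_add, actEnd_add, ha2 X, hb2 X, add_zero]⟩
  smul_mem' := by
    rintro c a ⟨ha1, ha2⟩
    exact ⟨spin7.smul_mem c ha1, fun X => by
      rw [toEnd_smul, actEnd_smul, ha2 X, mul_zero]⟩

/-- E_{jk}: +1 in entry (j,k), −1 in entry (k,j) (0-based indices) -/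
def Em (j k : Fin 8) : Matrix (Fin 8) (Fin 8) ℝ :=
  Matrix.single j k 1 - Matrix.single k j 1

def Mmat : Fin 7 → Matrix (Fin 8) (Fin 8) ℝ :=
  ![Em 0 7 + Em 1 6 - Em 2 5 - Em 3 4,
    -Em 0 6 + Em 1 7 + Em 2 4 - Em 3 5,
    -Em 0 5 + Em 1 4 - Em 2 7 + Em 3 6,
    -Em 0 4 - Em 1 5 - Em 2 6 - Em 3 7,
    -Em 0 2 - Em 1 3 + Em 4 6 + Em 5 7,
    Em 0 3 - Em 1 2 - Em 4 7 + Em 5 6,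
    Em 0 1 - Em 2 3 - Em 4 5 + Em 6 7]

/-- 16×16 matrix from four 8×8 blocks -/
def blk (A B C D : Matrix (Fin 8) (Fin 8) ℝ) : Matrix (Fin 16) (Fin 16) ℝ :=
  Matrix.reindex finSumFinEquiv finSumFinEquiv (Matrix.fromBlocks A B C D)

/-- the Clifford matrices γ₁,…,γ₈ -/
def gamma : Fin 8 → Matrix (Fin 16) (Fin 16) ℝ :=
  Fin.snoc (fun i => blk 0 (Mmat i) (Mmat i) 0) (blk 0 1 (-1) 0)

/-- the space of real spinors Δ₈ = ℝ¹⁶ -/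
abbrev Spinor := Fin 16 → ℝ

/-- standard basis spinor (0-based: `psi 0` is Ψ₁, …, `psi 15` is Ψ₁₆) -/
def psi (k : Fin 16) : Spinor := Pi.single k 1

/-- the spinor Ψ₀ = Ψ₉ − Ψ₁₀ -/
def Psi0 : Spinor := psi 8 - psi 9

def gammaProd {p : ℕ} (f : Fin p → Fin 8) : Matrix (Fin 16) (Fin 16) ℝ :=
  (List.ofFn fun a => gamma (f a)).prod

/-- the Clifford action ρ of a p-form, as a 16×16 matrix; on an alternating form this
equals `Σ_{i₁<…<i_p} T(e_{i₁},…,e_{i_p}) γ_{i₁}⋯γ_{i_p}`. -/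
def rhoF {p : ℕ} (T : (Fin p → V8) → ℝ) : Matrix (Fin 16) (Fin 16) ℝ :=
  (p.factorial : ℝ)⁻¹ • ∑ f : Fin p → Fin 8, T (fun a => eVec (f a)) • gammaProd f

/-- the Clifford action of a vector X: ρ(X) = Σ xᵢ γᵢ. -/
def rhoVec (X : V8) : Matrix (Fin 16) (Fin 16) ℝ := ∑ i, X i • gamma i

/-- the wedge product (on alternating inputs):
`(α∧β)(X) = (1/(p! q!)) Σ_σ sgn σ · α(X_{σ∘castAdd}) · β(X_{σ∘natAdd})`. -/
def wedgeF {p q : ℕ} (α : (Fin p → V8) → ℝ) (β : (Fin q → V8) → ℝ) :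
    (Fin (p + q) → V8) → ℝ :=
  fun X => ((p.factorial * q.factorial : ℕ) : ℝ)⁻¹ *
    ∑ σ : Equiv.Perm (Fin (p + q)), ((Equiv.Perm.sign σ : ℤ) : ℝ) *
      α (fun i => X (σ (Fin.castAdd q i))) * β (fun j => X (σ (Fin.natAdd p j)))

/-- contraction X⌟τ -/
def contrF {p : ℕ} (X : V8) (τ : (Fin (p + 1) → V8) → ℝ) : (Fin p → V8) → ℝ :=
  fun Y => τ (Fin.cons X Y)

/-- the inner product on p-forms making the e_{i₁…i_p} (i₁<…<i_p) orthonormal -/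
def formInnerF {p : ℕ} (α β : (Fin p → V8) → ℝ) : ℝ :=
  (p.factorial : ℝ)⁻¹ * ∑ f : Fin p → Fin 8,
    α (fun a => eVec (f a)) * β (fun a => eVec (f a))

/-- Λ³₈ = {X⌟Φ : X ∈ ℝ⁸} -/
def Lam38 : Submodule ℝ (AltForm 3) := LinearMap.range (AlternatingMap.curryLeft Phi)

lemma wedgeF_add_left {p q : ℕ} (a b : AltForm p) (β : (Fin q → V8) → ℝ)
    (X : Fin (p + q) → V8) :
    wedgeF (⇑(a + b)) β X = wedgeF ⇑a β X + wedgeF ⇑b β X := by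
  simp only [wedgeF, AlternatingMap.add_apply, add_mul, mul_add, Finset.sum_add_distrib]

lemma wedgeF_smul_left {p q : ℕ} (c : ℝ) (a : AltForm p) (β : (Fin q → V8) → ℝ)
    (X : Fin (p + q) → V8) :
    wedgeF (⇑(c • a)) β X = c * wedgeF ⇑a β X := by
  simp only [wedgeF, AlternatingMap.smul_apply, smul_eq_mul, Finset.mul_sum]
  exact Finset.sum_congr rfl fun σ _ => by ring

/-- Λ³₄₈ = {γ ∈ Λ³(ℝ⁸) : γ∧Φ = 0} -/
def Lam348 : Submodule ℝ (AltForm 3) where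
  carrier := {γ | ∀ X, wedgeF ⇑γ ⇑Phi X = 0}
  zero_mem' := fun X => by
    simp only [wedgeF, AlternatingMap.zero_apply, mul_zero, zero_mul,
      Finset.sum_const_zero]
  add_mem' := by
    intro a b ha hb X
    rw [wedgeF_add_left, ha X, hb X, add_zero]
  smul_mem' := by
    intro c a ha X
    rw [wedgeF_smul_left, ha X, mul_zero]


lemma e2_apply (i j : Fin 8) (X Y : V8) : e2 i j ![X, Y] = X i * Y j - X j * Y i := by
  show Matrix.det (Matrix.of fun a => (![X, Y] a) ∘ ![i,j]) = _
  rw [Matrix.det_fin_two]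
  simp

def p5 (X Y : V8) : ℝ := X 0 * Y 2 - X 2 * Y 0 + (X 1 * Y 3 - X 3 * Y 1)
def p6 (X Y : V8) : ℝ := X 0 * Y 3 - X 3 * Y 0 - (X 1 * Y 2 - X 2 * Y 1)
def p7 (X Y : V8) : ℝ := X 0 * Y 1 - X 1 * Y 0 - (X 2 * Y 3 - X 3 * Y 2)

lemma P5_apply (X Y : V8) : P5 ![X, Y] = p5 X Y := by
  simp [P5, e2_apply, p5]
lemma P6_apply (X Y : V8) : P6 ![X, Y] = p6 X Y := by
  simp [P6, e2_apply, p6]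
lemma P7_apply (X Y : V8) : P7 ![X, Y] = p7 X Y := by
  simp [P7, e2_apply, p7]

/-- the multilinear monomial `m ↦ m 0 (f 0) * m 1 (f 1) * m 2 (f 2) * m 3 (f 3)` -/
def mono (f : Fin 4 → Fin 8) : MultilinearMap ℝ (fun _ : Fin 4 => V8) ℝ :=
  (MultilinearMap.mkPiAlgebra ℝ (Fin 4) ℝ).compLinearMap (fun i => LinearMap.proj (f i))

lemma mono_apply (f : Fin 4 → Fin 8) (X Y Z V : V8) :
    mono f ![X, Y, Z, V] = X (f 0) * Y (f 1) * Z (f 2) * V (f 3) := by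
  simp [mono, Fin.prod_univ_four]

/-- the tensor product `e_ij ⊗ e_kl` as a 4-multilinear map -/
def tens (i j k l : Fin 8) : MultilinearMap ℝ (fun _ : Fin 4 => V8) ℝ :=
  mono ![i, j, k, l] - mono ![j, i, k, l] - mono ![i, j, l, k] + mono ![j, i, l, k]

lemma tens_apply (i j k l : Fin 8) (X Y Z V : V8) :
    tens i j k l ![X, Y, Z, V] = (X i * Y j - X j * Y i) * (Z k * V l - Z l * V k) := by
  simp only [tens, MultilinearMap.sub_apply, MultilinearMap.add_apply, mono_apply]
  simp only [Matrix.cons_val_zero, Matrix.cons_val_one, Matrix.head_cons,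
    Matrix.cons_val_two, Matrix.tail_cons, Matrix.cons_val_three]
  ring

/-- the curvature tensor `P5⊗P5 + P6⊗P6 − 2 P7⊗P7` -/
def Rcurv : MultilinearMap ℝ (fun _ : Fin 4 => V8) ℝ :=
  (tens 0 2 0 2 + tens 0 2 1 3 + tens 1 3 0 2 + tens 1 3 1 3)
  + (tens 0 3 0 3 - tens 0 3 1 2 - tens 1 2 0 3 + tens 1 2 1 2)
  - (2 : ℝ) • (tens 0 1 0 1 - tens 0 1 2 3 - tens 2 3 0 1 + tens 2 3 2 3)

lemma Rcurv_apply (X Y Z V : V8) :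
    Rcurv ![X, Y, Z, V] = p5 X Y * p5 Z V + p6 X Y * p6 Z V - 2 * (p7 X Y * p7 Z V) := by
  simp only [Rcurv, MultilinearMap.sub_apply, MultilinearMap.add_apply,
    MultilinearMap.smul_apply, smul_eq_mul, tens_apply, p5, p6, p7]
  ring

/-- K(su(2)) is non-trivial. -/
theorem statement3 :
    ∃ R : MultilinearMap ℝ (fun _ : Fin 4 => V8) ℝ,
      R ≠ 0 ∧
      (∀ X Y Z V : V8, R ![X, Y, Z, V] = -R ![Y, X, Z, V]) ∧
      (∀ X Y : V8, ∃ a b c : ℝ, ∀ Z V : V8,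
        R ![X, Y, Z, V] = a * P5 ![Z, V] + b * P6 ![Z, V] + c * P7 ![Z, V]) ∧
      (∀ X Y Z V : V8, R ![X, Y, Z, V] + R ![Y, Z, X, V] + R ![Z, X, Y, V] = 0) := by
  refine ⟨Rcurv, ?_, ?_, ?_, ?_⟩
  · intro h
    have h2 : Rcurv ![eVec 0, eVec 1, eVec 0, eVec 1] = 0 := by rw [h]; rfl
    rw [Rcurv_apply] at h2
    simp [p5, p6, p7, eVec, Pi.single_apply] at h2
  · intro X Y Z V
    rw [Rcurv_apply, Rcurv_apply]
    simp only [p5, p6, p7]; ring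
  · intro X Y
    refine ⟨p5 X Y, p6 X Y, -2 * p7 X Y, fun Z V => ?_⟩
    rw [Rcurv_apply, P5_apply, P6_apply, P7_apply]; ring
  · intro X Y Z V
    rw [Rcurv_apply, Rcurv_apply, Rcurv_apply]
    simp only [p5, p6, p7]; ring

end Spin7Paper
end
end

section
/- For h = su_c(2) := span(P₇+2P₈, Q₅, Q₆) ⊂ Λ²(ℝ⁸), the space K(h) of algebraic curvature tensors with values in h is trivial: every quadrilinear map R : (ℝ⁸)⁴ → ℝ with R(X,Y,Z,V) = −R(Y,X,Z,V), with (Z,V) ↦ R(X,Y,Z,V) lying in h for all X,Y, and satisfying the first Bianchi identity R(X,Y,Z,V)+R(Y,Z,X,V)+R(Z,X,Y,V) = 0, is identically zero. -/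
open scoped BigOperators
open Matrix

noncomputable section
namespace Spin7Paper

lemma e2_basis (i j k l : Fin 8) : e2 i j ![eVec k, eVec l] =
    (if i = k then (1:ℝ) else 0) * (if j = l then 1 else 0)
    - (if j = k then (1:ℝ) else 0) * (if i = l then 1 else 0) := by
  have h : e2 i j ![eVec k, eVec l]
      = Matrix.det (Matrix.of fun m n : Fin 2 => (![eVec k, eVec l] m) (![i,j] n)) := rfl
  rw [h, Matrix.det_fin_two]
  simp only [Matrix.of_apply, Matrix.cons_val_zero, Matrix.cons_val_one, Matrix.head_cons,
    eVec, Pi.single_apply]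

lemma alt2_swap (ω : AltForm 2) (Z V : V8) : ω ![V, Z] = - ω ![Z, V] := by
  have h : ![Z, V] ∘ Equiv.swap (0:Fin 2) 1 = ![V, Z] := by
    funext a; fin_cases a <;> simp [Equiv.swap_apply_of_ne_of_ne]
  have h2 := ω.map_swap ![Z,V] (by decide : (0:Fin 2) ≠ 1)
  rw [h] at h2; exact h2

lemma wv1_0_1 : (P7 + (2 : ℝ) • P8) ![eVec 0, eVec 1] = 1 := by
  simp (config := { decide := true }) only [P7,P8, AlternatingMap.add_apply,
    AlternatingMap.sub_apply, AlternatingMap.smul_apply, smul_eq_mul, e2_basis]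
  try norm_num

lemma wv1_0_2 : (P7 + (2 : ℝ) • P8) ![eVec 0, eVec 2] = 0 := by
  simp (config := { decide := true }) only [P7,P8, AlternatingMap.add_apply,
    AlternatingMap.sub_apply, AlternatingMap.smul_apply, smul_eq_mul, e2_basis]
  try norm_num

lemma wv1_0_3 : (P7 + (2 : ℝ) • P8) ![eVec 0, eVec 3] = 0 := by
  simp (config := { decide := true }) only [P7,P8, AlternatingMap.add_apply,
    AlternatingMap.sub_apply, AlternatingMap.smul_apply, smul_eq_mul, e2_basis]
  try norm_num

lemma wv1_0_5 : (P7 + (2 : ℝ) • P8) ![eVec 0, eVec 5] = 0 := by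
  simp (config := { decide := true }) only [P7,P8, AlternatingMap.add_apply,
    AlternatingMap.sub_apply, AlternatingMap.smul_apply, smul_eq_mul, e2_basis]
  try norm_num

lemma wv1_0_6 : (P7 + (2 : ℝ) • P8) ![eVec 0, eVec 6] = 0 := by
  simp (config := { decide := true }) only [P7,P8, AlternatingMap.add_apply,
    AlternatingMap.sub_apply, AlternatingMap.smul_apply, smul_eq_mul, e2_basis]
  try norm_num

lemma wv1_1_2 : (P7 + (2 : ℝ) • P8) ![eVec 1, eVec 2] = 0 := by
  simp (config := { decide := true }) only [P7,P8, AlternatingMap.add_apply,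
    AlternatingMap.sub_apply, AlternatingMap.smul_apply, smul_eq_mul, e2_basis]
  try norm_num

lemma wv1_1_3 : (P7 + (2 : ℝ) • P8) ![eVec 1, eVec 3] = 0 := by
  simp (config := { decide := true }) only [P7,P8, AlternatingMap.add_apply,
    AlternatingMap.sub_apply, AlternatingMap.smul_apply, smul_eq_mul, e2_basis]
  try norm_num

lemma wv1_1_4 : (P7 + (2 : ℝ) • P8) ![eVec 1, eVec 4] = 0 := by
  simp (config := { decide := true }) only [P7,P8, AlternatingMap.add_apply,
    AlternatingMap.sub_apply, AlternatingMap.smul_apply, smul_eq_mul, e2_basis]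
  try norm_num

lemma wv1_1_5 : (P7 + (2 : ℝ) • P8) ![eVec 1, eVec 5] = 0 := by
  simp (config := { decide := true }) only [P7,P8, AlternatingMap.add_apply,
    AlternatingMap.sub_apply, AlternatingMap.smul_apply, smul_eq_mul, e2_basis]
  try norm_num

lemma wv1_1_6 : (P7 + (2 : ℝ) • P8) ![eVec 1, eVec 6] = 0 := by
  simp (config := { decide := true }) only [P7,P8, AlternatingMap.add_apply,
    AlternatingMap.sub_apply, AlternatingMap.smul_apply, smul_eq_mul, e2_basis]
  try norm_num

lemma wv1_2_0 : (P7 + (2 : ℝ) • P8) ![eVec 2, eVec 0] = 0 := by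
  simp (config := { decide := true }) only [P7,P8, AlternatingMap.add_apply,
    AlternatingMap.sub_apply, AlternatingMap.smul_apply, smul_eq_mul, e2_basis]
  try norm_num

lemma wv1_2_3 : (P7 + (2 : ℝ) • P8) ![eVec 2, eVec 3] = 1 := by
  simp (config := { decide := true }) only [P7,P8, AlternatingMap.add_apply,
    AlternatingMap.sub_apply, AlternatingMap.smul_apply, smul_eq_mul, e2_basis]
  try norm_num

lemma wv1_2_4 : (P7 + (2 : ℝ) • P8) ![eVec 2, eVec 4] = 0 := by
  simp (config := { decide := true }) only [P7,P8, AlternatingMap.add_apply,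
    AlternatingMap.sub_apply, AlternatingMap.smul_apply, smul_eq_mul, e2_basis]
  try norm_num

lemma wv1_2_5 : (P7 + (2 : ℝ) • P8) ![eVec 2, eVec 5] = 0 := by
  simp (config := { decide := true }) only [P7,P8, AlternatingMap.add_apply,
    AlternatingMap.sub_apply, AlternatingMap.smul_apply, smul_eq_mul, e2_basis]
  try norm_num

lemma wv1_2_6 : (P7 + (2 : ℝ) • P8) ![eVec 2, eVec 6] = 0 := by
  simp (config := { decide := true }) only [P7,P8, AlternatingMap.add_apply,
    AlternatingMap.sub_apply, AlternatingMap.smul_apply, smul_eq_mul, e2_basis]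
  try norm_num

lemma wv1_4_0 : (P7 + (2 : ℝ) • P8) ![eVec 4, eVec 0] = 0 := by
  simp (config := { decide := true }) only [P7,P8, AlternatingMap.add_apply,
    AlternatingMap.sub_apply, AlternatingMap.smul_apply, smul_eq_mul, e2_basis]
  try norm_num

lemma wv1_4_5 : (P7 + (2 : ℝ) • P8) ![eVec 4, eVec 5] = -2 := by
  simp (config := { decide := true }) only [P7,P8, AlternatingMap.add_apply,
    AlternatingMap.sub_apply, AlternatingMap.smul_apply, smul_eq_mul, e2_basis]
  try norm_num

lemma wv1_4_6 : (P7 + (2 : ℝ) • P8) ![eVec 4, eVec 6] = 0 := by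
  simp (config := { decide := true }) only [P7,P8, AlternatingMap.add_apply,
    AlternatingMap.sub_apply, AlternatingMap.smul_apply, smul_eq_mul, e2_basis]
  try norm_num

lemma wv1_5_0 : (P7 + (2 : ℝ) • P8) ![eVec 5, eVec 0] = 0 := by
  simp (config := { decide := true }) only [P7,P8, AlternatingMap.add_apply,
    AlternatingMap.sub_apply, AlternatingMap.smul_apply, smul_eq_mul, e2_basis]
  try norm_num

lemma wv1_5_6 : (P7 + (2 : ℝ) • P8) ![eVec 5, eVec 6] = 0 := by
  simp (config := { decide := true }) only [P7,P8, AlternatingMap.add_apply,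
    AlternatingMap.sub_apply, AlternatingMap.smul_apply, smul_eq_mul, e2_basis]
  try norm_num

lemma wv2_0_1 : Q5 ![eVec 0, eVec 1] = 0 := by
  simp (config := { decide := true }) only [Q5, AlternatingMap.add_apply,
    AlternatingMap.sub_apply, AlternatingMap.smul_apply, smul_eq_mul, e2_basis]
  try norm_num

lemma wv2_0_2 : Q5 ![eVec 0, eVec 2] = -1 := by
  simp (config := { decide := true }) only [Q5, AlternatingMap.add_apply,
    AlternatingMap.sub_apply, AlternatingMap.smul_apply, smul_eq_mul, e2_basis]
  try norm_num

lemma wv2_0_3 : Q5 ![eVec 0, eVec 3] = 0 := by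
  simp (config := { decide := true }) only [Q5, AlternatingMap.add_apply,
    AlternatingMap.sub_apply, AlternatingMap.smul_apply, smul_eq_mul, e2_basis]
  try norm_num

lemma wv2_0_5 : Q5 ![eVec 0, eVec 5] = 0 := by
  simp (config := { decide := true }) only [Q5, AlternatingMap.add_apply,
    AlternatingMap.sub_apply, AlternatingMap.smul_apply, smul_eq_mul, e2_basis]
  try norm_num

lemma wv2_0_6 : Q5 ![eVec 0, eVec 6] = 0 := by
  simp (config := { decide := true }) only [Q5, AlternatingMap.add_apply,
    AlternatingMap.sub_apply, AlternatingMap.smul_apply, smul_eq_mul, e2_basis]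
  try norm_num

lemma wv2_1_2 : Q5 ![eVec 1, eVec 2] = 0 := by
  simp (config := { decide := true }) only [Q5, AlternatingMap.add_apply,
    AlternatingMap.sub_apply, AlternatingMap.smul_apply, smul_eq_mul, e2_basis]
  try norm_num

lemma wv2_1_3 : Q5 ![eVec 1, eVec 3] = 1 := by
  simp (config := { decide := true }) only [Q5, AlternatingMap.add_apply,
    AlternatingMap.sub_apply, AlternatingMap.smul_apply, smul_eq_mul, e2_basis]
  try norm_num

lemma wv2_1_4 : Q5 ![eVec 1, eVec 4] = 0 := by
  simp (config := { decide := true }) only [Q5, AlternatingMap.add_apply,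
    AlternatingMap.sub_apply, AlternatingMap.smul_apply, smul_eq_mul, e2_basis]
  try norm_num

lemma wv2_1_5 : Q5 ![eVec 1, eVec 5] = 0 := by
  simp (config := { decide := true }) only [Q5, AlternatingMap.add_apply,
    AlternatingMap.sub_apply, AlternatingMap.smul_apply, smul_eq_mul, e2_basis]
  try norm_num

lemma wv2_1_6 : Q5 ![eVec 1, eVec 6] = 0 := by
  simp (config := { decide := true }) only [Q5, AlternatingMap.add_apply,
    AlternatingMap.sub_apply, AlternatingMap.smul_apply, smul_eq_mul, e2_basis]
  try norm_num

lemma wv2_2_0 : Q5 ![eVec 2, eVec 0] = 1 := by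
  simp (config := { decide := true }) only [Q5, AlternatingMap.add_apply,
    AlternatingMap.sub_apply, AlternatingMap.smul_apply, smul_eq_mul, e2_basis]
  try norm_num

lemma wv2_2_3 : Q5 ![eVec 2, eVec 3] = 0 := by
  simp (config := { decide := true }) only [Q5, AlternatingMap.add_apply,
    AlternatingMap.sub_apply, AlternatingMap.smul_apply, smul_eq_mul, e2_basis]
  try norm_num

lemma wv2_2_4 : Q5 ![eVec 2, eVec 4] = 0 := by
  simp (config := { decide := true }) only [Q5, AlternatingMap.add_apply,
    AlternatingMap.sub_apply, AlternatingMap.smul_apply, smul_eq_mul, e2_basis]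
  try norm_num

lemma wv2_2_5 : Q5 ![eVec 2, eVec 5] = 0 := by
  simp (config := { decide := true }) only [Q5, AlternatingMap.add_apply,
    AlternatingMap.sub_apply, AlternatingMap.smul_apply, smul_eq_mul, e2_basis]
  try norm_num

lemma wv2_2_6 : Q5 ![eVec 2, eVec 6] = 0 := by
  simp (config := { decide := true }) only [Q5, AlternatingMap.add_apply,
    AlternatingMap.sub_apply, AlternatingMap.smul_apply, smul_eq_mul, e2_basis]
  try norm_num

lemma wv2_4_0 : Q5 ![eVec 4, eVec 0] = 0 := by
  simp (config := { decide := true }) only [Q5, AlternatingMap.add_apply,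
    AlternatingMap.sub_apply, AlternatingMap.smul_apply, smul_eq_mul, e2_basis]
  try norm_num

lemma wv2_4_5 : Q5 ![eVec 4, eVec 5] = 0 := by
  simp (config := { decide := true }) only [Q5, AlternatingMap.add_apply,
    AlternatingMap.sub_apply, AlternatingMap.smul_apply, smul_eq_mul, e2_basis]
  try norm_num

lemma wv2_4_6 : Q5 ![eVec 4, eVec 6] = 2 := by
  simp (config := { decide := true }) only [Q5, AlternatingMap.add_apply,
    AlternatingMap.sub_apply, AlternatingMap.smul_apply, smul_eq_mul, e2_basis]
  try norm_num

lemma wv2_5_0 : Q5 ![eVec 5, eVec 0] = 0 := by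
  simp (config := { decide := true }) only [Q5, AlternatingMap.add_apply,
    AlternatingMap.sub_apply, AlternatingMap.smul_apply, smul_eq_mul, e2_basis]
  try norm_num

lemma wv2_5_6 : Q5 ![eVec 5, eVec 6] = 0 := by
  simp (config := { decide := true }) only [Q5, AlternatingMap.add_apply,
    AlternatingMap.sub_apply, AlternatingMap.smul_apply, smul_eq_mul, e2_basis]
  try norm_num

lemma wv3_0_1 : Q6 ![eVec 0, eVec 1] = 0 := by
  simp (config := { decide := true }) only [Q6, AlternatingMap.add_apply,
    AlternatingMap.sub_apply, AlternatingMap.smul_apply, smul_eq_mul, e2_basis]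
  try norm_num

lemma wv3_0_2 : Q6 ![eVec 0, eVec 2] = 0 := by
  simp (config := { decide := true }) only [Q6, AlternatingMap.add_apply,
    AlternatingMap.sub_apply, AlternatingMap.smul_apply, smul_eq_mul, e2_basis]
  try norm_num

lemma wv3_0_3 : Q6 ![eVec 0, eVec 3] = 1 := by
  simp (config := { decide := true }) only [Q6, AlternatingMap.add_apply,
    AlternatingMap.sub_apply, AlternatingMap.smul_apply, smul_eq_mul, e2_basis]
  try norm_num

lemma wv3_0_5 : Q6 ![eVec 0, eVec 5] = 0 := by
  simp (config := { decide := true }) only [Q6, AlternatingMap.add_apply,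
    AlternatingMap.sub_apply, AlternatingMap.smul_apply, smul_eq_mul, e2_basis]
  try norm_num

lemma wv3_0_6 : Q6 ![eVec 0, eVec 6] = 0 := by
  simp (config := { decide := true }) only [Q6, AlternatingMap.add_apply,
    AlternatingMap.sub_apply, AlternatingMap.smul_apply, smul_eq_mul, e2_basis]
  try norm_num

lemma wv3_1_2 : Q6 ![eVec 1, eVec 2] = 1 := by
  simp (config := { decide := true }) only [Q6, AlternatingMap.add_apply,
    AlternatingMap.sub_apply, AlternatingMap.smul_apply, smul_eq_mul, e2_basis]
  try norm_num

lemma wv3_1_3 : Q6 ![eVec 1, eVec 3] = 0 := by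
  simp (config := { decide := true }) only [Q6, AlternatingMap.add_apply,
    AlternatingMap.sub_apply, AlternatingMap.smul_apply, smul_eq_mul, e2_basis]
  try norm_num

lemma wv3_1_4 : Q6 ![eVec 1, eVec 4] = 0 := by
  simp (config := { decide := true }) only [Q6, AlternatingMap.add_apply,
    AlternatingMap.sub_apply, AlternatingMap.smul_apply, smul_eq_mul, e2_basis]
  try norm_num

lemma wv3_1_5 : Q6 ![eVec 1, eVec 5] = 0 := by
  simp (config := { decide := true }) only [Q6, AlternatingMap.add_apply,
    AlternatingMap.sub_apply, AlternatingMap.smul_apply, smul_eq_mul, e2_basis]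
  try norm_num

lemma wv3_1_6 : Q6 ![eVec 1, eVec 6] = 0 := by
  simp (config := { decide := true }) only [Q6, AlternatingMap.add_apply,
    AlternatingMap.sub_apply, AlternatingMap.smul_apply, smul_eq_mul, e2_basis]
  try norm_num

lemma wv3_2_0 : Q6 ![eVec 2, eVec 0] = 0 := by
  simp (config := { decide := true }) only [Q6, AlternatingMap.add_apply,
    AlternatingMap.sub_apply, AlternatingMap.smul_apply, smul_eq_mul, e2_basis]
  try norm_num

lemma wv3_2_3 : Q6 ![eVec 2, eVec 3] = 0 := by
  simp (config := { decide := true }) only [Q6, AlternatingMap.add_apply,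
    AlternatingMap.sub_apply, AlternatingMap.smul_apply, smul_eq_mul, e2_basis]
  try norm_num

lemma wv3_2_4 : Q6 ![eVec 2, eVec 4] = 0 := by
  simp (config := { decide := true }) only [Q6, AlternatingMap.add_apply,
    AlternatingMap.sub_apply, AlternatingMap.smul_apply, smul_eq_mul, e2_basis]
  try norm_num

lemma wv3_2_5 : Q6 ![eVec 2, eVec 5] = 0 := by
  simp (config := { decide := true }) only [Q6, AlternatingMap.add_apply,
    AlternatingMap.sub_apply, AlternatingMap.smul_apply, smul_eq_mul, e2_basis]
  try norm_num

lemma wv3_2_6 : Q6 ![eVec 2, eVec 6] = 0 := by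
  simp (config := { decide := true }) only [Q6, AlternatingMap.add_apply,
    AlternatingMap.sub_apply, AlternatingMap.smul_apply, smul_eq_mul, e2_basis]
  try norm_num

lemma wv3_4_0 : Q6 ![eVec 4, eVec 0] = 0 := by
  simp (config := { decide := true }) only [Q6, AlternatingMap.add_apply,
    AlternatingMap.sub_apply, AlternatingMap.smul_apply, smul_eq_mul, e2_basis]
  try norm_num

lemma wv3_4_5 : Q6 ![eVec 4, eVec 5] = 0 := by
  simp (config := { decide := true }) only [Q6, AlternatingMap.add_apply,
    AlternatingMap.sub_apply, AlternatingMap.smul_apply, smul_eq_mul, e2_basis]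
  try norm_num

lemma wv3_4_6 : Q6 ![eVec 4, eVec 6] = 0 := by
  simp (config := { decide := true }) only [Q6, AlternatingMap.add_apply,
    AlternatingMap.sub_apply, AlternatingMap.smul_apply, smul_eq_mul, e2_basis]
  try norm_num

lemma wv3_5_0 : Q6 ![eVec 5, eVec 0] = 0 := by
  simp (config := { decide := true }) only [Q6, AlternatingMap.add_apply,
    AlternatingMap.sub_apply, AlternatingMap.smul_apply, smul_eq_mul, e2_basis]
  try norm_num

lemma wv3_5_6 : Q6 ![eVec 5, eVec 6] = 2 := by
  simp (config := { decide := true }) only [Q6, AlternatingMap.add_apply,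
    AlternatingMap.sub_apply, AlternatingMap.smul_apply, smul_eq_mul, e2_basis]
  try norm_num




/-- K(su_c(2)) is trivial. -/
theorem statement4 (R : MultilinearMap ℝ (fun _ : Fin 4 => V8) ℝ)
    (hanti : ∀ X Y Z V : V8, R ![X, Y, Z, V] = -R ![Y, X, Z, V])
    (hval : ∀ X Y : V8, ∃ a b c : ℝ, ∀ Z V : V8,
      R ![X, Y, Z, V] = a * (P7 + (2 : ℝ) • P8) ![Z, V] + b * Q5 ![Z, V] + c * Q6 ![Z, V])
    (hbianchi : ∀ X Y Z V : V8, R ![X, Y, Z, V] + R ![Y, Z, X, V] + R ![Z, X, Y, V] = 0) :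
    R = 0 := by
  have hZ : ∀ X Y Z V : V8, R ![X, Y, Z, V] = -R ![X, Y, V, Z] := by
    intro X Y Z V
    obtain ⟨a, b, c, h⟩ := hval X Y
    rw [h Z V, h V Z, alt2_swap (P7 + (2 : ℝ) • P8) Z V, alt2_swap Q5 Z V, alt2_swap Q6 Z V]
    ring
  have hsymm : ∀ X Y Z V : V8, R ![X, Y, Z, V] = R ![Z, V, X, Y] := by
    intro X Y Z V
    linarith [hbianchi X Y Z V, hbianchi Y Z V X, hbianchi Z V X Y, hbianchi V X Y Z,
      hZ Y Z X V, hanti Z X Y V, hZ X Z Y V, hZ Z V Y X, hanti V Y Z X, hZ Y V Z X,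
      hZ X Y V Z, hZ V X Z Y]
  have key : ∀ (X Y : V8) (k l : Fin 8), R ![X, Y, eVec k, eVec l] =
      R ![X, Y, eVec 0, eVec 1] * (P7 + (2 : ℝ) • P8) ![eVec k, eVec l]
      + R ![X, Y, eVec 4, eVec 6] / 2 * Q5 ![eVec k, eVec l]
      + R ![X, Y, eVec 5, eVec 6] / 2 * Q6 ![eVec k, eVec l] := by
    intro X Y k l
    obtain ⟨a, b, c, h⟩ := hval X Y
    have h01 := h (eVec 0) (eVec 1)
    have h46 := h (eVec 4) (eVec 6)
    have h56 := h (eVec 5) (eVec 6)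
    rw [wv1_0_1, wv2_0_1, wv3_0_1] at h01
    rw [wv1_4_6, wv2_4_6, wv3_4_6] at h46
    rw [wv1_5_6, wv2_5_6, wv3_5_6] at h56
    have ha : a = R ![X, Y, eVec 0, eVec 1] := by linarith
    have hb : b = R ![X, Y, eVec 4, eVec 6] / 2 := by linarith
    have hc : c = R ![X, Y, eVec 5, eVec 6] / 2 := by linarith
    rw [h (eVec k) (eVec l), ha, hb, hc]
  have master : ∀ i j k l : Fin 8, R ![eVec i, eVec j, eVec k, eVec l] =
      (R ![eVec 0, eVec 1, eVec 0, eVec 1] * (P7 + (2 : ℝ) • P8) ![eVec i, eVec j] + R ![eVec 0, eVec 1, eVec 4, eVec 6] / 2 * Q5 ![eVec i, eVec j] + R ![eVec 0, eVec 1, eVec 5, eVec 6] / 2 * Q6 ![eVec i, eVec j]) * (P7 + (2 : ℝ) • P8) ![eVec k, eVec l]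
      + ((R ![eVec 0, eVec 1, eVec 4, eVec 6] * (P7 + (2 : ℝ) • P8) ![eVec i, eVec j] + R ![eVec 4, eVec 6, eVec 4, eVec 6] / 2 * Q5 ![eVec i, eVec j] + R ![eVec 4, eVec 6, eVec 5, eVec 6] / 2 * Q6 ![eVec i, eVec j]) / 2) * Q5 ![eVec k, eVec l]
      + ((R ![eVec 0, eVec 1, eVec 5, eVec 6] * (P7 + (2 : ℝ) • P8) ![eVec i, eVec j] + R ![eVec 4, eVec 6, eVec 5, eVec 6] / 2 * Q5 ![eVec i, eVec j] + R ![eVec 5, eVec 6, eVec 5, eVec 6] / 2 * Q6 ![eVec i, eVec j]) / 2) * Q6 ![eVec k, eVec l] := by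
    intro i j k l
    rw [key (eVec i) (eVec j) k l,
        hsymm (eVec i) (eVec j) (eVec 0) (eVec 1),
        hsymm (eVec i) (eVec j) (eVec 4) (eVec 6),
        hsymm (eVec i) (eVec j) (eVec 5) (eVec 6),
        key (eVec 0) (eVec 1) i j,
        key (eVec 4) (eVec 6) i j,
        key (eVec 5) (eVec 6) i j,
        hsymm (eVec 4) (eVec 6) (eVec 0) (eVec 1),
        hsymm (eVec 5) (eVec 6) (eVec 0) (eVec 1),
        hsymm (eVec 5) (eVec 6) (eVec 4) (eVec 6)]

  have B1 := hbianchi (eVec 0) (eVec 1) (eVec 4) (eVec 5)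
  rw [master 0 1 4 5, master 1 4 0 5, master 4 0 1 5] at B1
  rw [wv1_0_1, wv1_0_5, wv1_1_4, wv1_1_5, wv1_4_0, wv1_4_5, wv2_0_1, wv2_0_5, wv2_1_4, wv2_1_5, wv2_4_0, wv2_4_5, wv3_0_1, wv3_0_5, wv3_1_4, wv3_1_5, wv3_4_0, wv3_4_5] at B1
  ring_nf at B1
  have B2 := hbianchi (eVec 0) (eVec 1) (eVec 4) (eVec 6)
  rw [master 0 1 4 6, master 1 4 0 6, master 4 0 1 6] at B2
  rw [wv1_0_1, wv1_0_6, wv1_1_4, wv1_1_6, wv1_4_0, wv1_4_6, wv2_0_1, wv2_0_6, wv2_1_4, wv2_1_6, wv2_4_0, wv2_4_6, wv3_0_1, wv3_0_6, wv3_1_4, wv3_1_6, wv3_4_0, wv3_4_6] at B2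
  ring_nf at B2
  have B3 := hbianchi (eVec 0) (eVec 1) (eVec 5) (eVec 6)
  rw [master 0 1 5 6, master 1 5 0 6, master 5 0 1 6] at B3
  rw [wv1_0_1, wv1_0_6, wv1_1_5, wv1_1_6, wv1_5_0, wv1_5_6, wv2_0_1, wv2_0_6, wv2_1_5, wv2_1_6, wv2_5_0, wv2_5_6, wv3_0_1, wv3_0_6, wv3_1_5, wv3_1_6, wv3_5_0, wv3_5_6] at B3
  ring_nf at B3
  have B4 := hbianchi (eVec 0) (eVec 2) (eVec 4) (eVec 6)
  rw [master 0 2 4 6, master 2 4 0 6, master 4 0 2 6] at B4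
  rw [wv1_0_2, wv1_0_6, wv1_2_4, wv1_2_6, wv1_4_0, wv1_4_6, wv2_0_2, wv2_0_6, wv2_2_4, wv2_2_6, wv2_4_0, wv2_4_6, wv3_0_2, wv3_0_6, wv3_2_4, wv3_2_6, wv3_4_0, wv3_4_6] at B4
  ring_nf at B4
  have B5 := hbianchi (eVec 0) (eVec 2) (eVec 5) (eVec 6)
  rw [master 0 2 5 6, master 2 5 0 6, master 5 0 2 6] at B5
  rw [wv1_0_2, wv1_0_6, wv1_2_5, wv1_2_6, wv1_5_0, wv1_5_6, wv2_0_2, wv2_0_6, wv2_2_5, wv2_2_6, wv2_5_0, wv2_5_6, wv3_0_2, wv3_0_6, wv3_2_5, wv3_2_6, wv3_5_0, wv3_5_6] at B5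
  ring_nf at B5
  have B6 := hbianchi (eVec 0) (eVec 1) (eVec 2) (eVec 3)
  rw [master 0 1 2 3, master 1 2 0 3, master 2 0 1 3] at B6
  rw [wv1_0_1, wv1_0_3, wv1_1_2, wv1_1_3, wv1_2_0, wv1_2_3, wv2_0_1, wv2_0_3, wv2_1_2, wv2_1_3, wv2_2_0, wv2_2_3, wv3_0_1, wv3_0_3, wv3_1_2, wv3_1_3, wv3_2_0, wv3_2_3] at B6
  ring_nf at B6
  have ht11 : R ![eVec 0, eVec 1, eVec 0, eVec 1] = 0 := by linarith
  have ht12 : R ![eVec 0, eVec 1, eVec 4, eVec 6] = 0 := by linarith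
  have ht13 : R ![eVec 0, eVec 1, eVec 5, eVec 6] = 0 := by linarith
  have ht22 : R ![eVec 4, eVec 6, eVec 4, eVec 6] = 0 := by linarith
  have ht23 : R ![eVec 4, eVec 6, eVec 5, eVec 6] = 0 := by linarith
  have ht33 : R ![eVec 5, eVec 6, eVec 5, eVec 6] = 0 := by linarith
  refine Module.Basis.ext_multilinear (fun _ => Pi.basisFun ℝ (Fin 8)) fun v => ?_
  have hv : (fun i => (Pi.basisFun ℝ (Fin 8)) (v i)) = ![eVec (v 0), eVec (v 1), eVec (v 2), eVec (v 3)] := by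
    funext a; fin_cases a <;> simp [eVec, Pi.basisFun_apply]
  simp only [MultilinearMap.zero_apply]
  rw [hv, master (v 0) (v 1) (v 2) (v 3), ht11, ht12, ht13, ht22, ht23, ht33]
  ring


end Spin7Paper
end
end

section
/- For h = so(3) := span(P₁+P₅, P₂+P₆, P₇+P₈) ⊂ Λ²(ℝ⁸), the space K(h) of algebraic curvature tensors with values in h is trivial: every quadrilinear map R : (ℝ⁸)⁴ → ℝ with R(X,Y,Z,V) = −R(Y,X,Z,V), with (Z,V) ↦ R(X,Y,Z,V) lying in h for all X,Y, and satisfying the first Bianchi identity R(X,Y,Z,V)+R(Y,Z,X,V)+R(Z,X,Y,V) = 0, is identically zero. -/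
open scoped BigOperators
open Matrix

noncomputable section
namespace Spin7Paper

/-! ### Auxiliary material for statement5 -/

lemma e2_eval' (i j : Fin 8) (Z V : V8) : e2 i j ![Z, V] = Z i * V j - Z j * V i := by
  have h : e2 i j ![Z, V] = Matrix.det (Matrix.of fun r c => (![Z, V] r) (![i, j] c)) := rfl
  rw [h, Matrix.det_fin_two]
  simp

/-- value of the 2x2 minor determinant on basis vectors -/
def Dv (a b k l : Fin 8) : ℝ :=
  (if a = k then (1:ℝ) else 0) * (if b = l then 1 else 0)
  - (if b = k then (1:ℝ) else 0) * (if a = l then 1 else 0)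

lemma e2_basis_s5 (a b k l : Fin 8) : e2 a b ![eVec k, eVec l] = Dv a b k l := by
  rw [e2_eval']
  simp [eVec, Dv, Pi.single_apply]

def G1 (k l : Fin 8) : ℝ := Dv 0 2 k l + Dv 1 3 k l + Dv 2 4 k l + Dv 3 5 k l
def G2 (k l : Fin 8) : ℝ := Dv 0 3 k l - Dv 1 2 k l + Dv 2 5 k l - Dv 3 4 k l
def G3 (k l : Fin 8) : ℝ := Dv 0 1 k l - Dv 4 5 k l

lemma hG1 (k l : Fin 8) : (P1 + P5) ![eVec k, eVec l] = G1 k l := by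
  simp only [P1, P5, AlternatingMap.add_apply, e2_basis_s5, G1]
  ring

lemma hG2 (k l : Fin 8) : (P2 + P6) ![eVec k, eVec l] = G2 k l := by
  simp only [P2, P6, AlternatingMap.add_apply, AlternatingMap.sub_apply, e2_basis_s5, G2]
  ring

lemma hG3 (k l : Fin 8) : (P7 + P8) ![eVec k, eVec l] = G3 k l := by
  simp only [P7, P8, AlternatingMap.add_apply, AlternatingMap.sub_apply, e2_basis_s5, G3]
  ring

/-- K(so(3)) is trivial. -/
theorem statement5 (R : MultilinearMap ℝ (fun _ : Fin 4 => V8) ℝ)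
    (hanti : ∀ X Y Z V : V8, R ![X, Y, Z, V] = -R ![Y, X, Z, V])
    (hval : ∀ X Y : V8, ∃ a b c : ℝ, ∀ Z V : V8,
      R ![X, Y, Z, V] = a * (P1 + P5) ![Z, V] + b * (P2 + P6) ![Z, V] + c * (P7 + P8) ![Z, V])
    (hbianchi : ∀ X Y Z V : V8, R ![X, Y, Z, V] + R ![Y, Z, X, V] + R ![Z, X, Y, V] = 0) :
    R = 0 := by
  -- second-pair antisymmetry
  have hanti2 : ∀ X Y Z V : V8, R ![X, Y, Z, V] = -R ![X, Y, V, Z] := by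
    intro X Y Z V
    obtain ⟨a, b, c, h⟩ := hval X Y
    rw [h Z V, h V Z]
    simp only [P1, P2, P5, P6, P7, P8, AlternatingMap.add_apply, AlternatingMap.sub_apply,
      e2_eval']
    ring
  -- pair symmetry
  have hsym : ∀ X Y Z V : V8, R ![X, Y, Z, V] = R ![Z, V, X, Y] := by
    intro X Y Z V
    linarith [hbianchi Y Z X V, hbianchi Z X V Y, hbianchi X V Y Z, hbianchi V Y Z X,
      hanti2 Z X Y V, hanti2 X V Z Y, hanti2 Y Z X V, hanti V Z X Y, hanti2 Z V X Y,
      hanti2 V Y Z X, hanti Y X V Z, hanti2 X Y Z V]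
  obtain ⟨p1, p2, p3, h1⟩ := hval (eVec 0) (eVec 2)
  obtain ⟨q1, q2, q3, h2⟩ := hval (eVec 0) (eVec 3)
  obtain ⟨r1, r2, r3, h3⟩ := hval (eVec 0) (eVec 1)
  have hrow1 : ∀ k l : Fin 8, R ![eVec 0, eVec 2, eVec k, eVec l]
      = p1 * G1 k l + p2 * G2 k l + p3 * G3 k l := by
    intro k l; rw [h1 (eVec k) (eVec l), hG1, hG2, hG3]
  have hrow2 : ∀ k l : Fin 8, R ![eVec 0, eVec 3, eVec k, eVec l]
      = q1 * G1 k l + q2 * G2 k l + q3 * G3 k l := by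
    intro k l; rw [h2 (eVec k) (eVec l), hG1, hG2, hG3]
  have hrow3 : ∀ k l : Fin 8, R ![eVec 0, eVec 1, eVec k, eVec l]
      = r1 * G1 k l + r2 * G2 k l + r3 * G3 k l := by
    intro k l; rw [h3 (eVec k) (eVec l), hG1, hG2, hG3]
  have master : ∀ i j k l : Fin 8, R ![eVec i, eVec j, eVec k, eVec l]
      = (p1 * G1 i j + p2 * G2 i j + p3 * G3 i j) * G1 k l
      + (q1 * G1 i j + q2 * G2 i j + q3 * G3 i j) * G2 k l
      + (r1 * G1 i j + r2 * G2 i j + r3 * G3 i j) * G3 k l := by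
    intro i j k l
    obtain ⟨a, b, c, h⟩ := hval (eVec i) (eVec j)
    have ha : a = p1 * G1 i j + p2 * G2 i j + p3 * G3 i j := by
      have h02 := h (eVec 0) (eVec 2)
      rw [hG1, hG2, hG3] at h02
      have hs := hsym (eVec i) (eVec j) (eVec 0) (eVec 2)
      rw [hrow1 i j] at hs
      simp (config := { decide := true }) only [G1, G2, G3, Dv] at h02; norm_num at h02
      linarith
    have hb : b = q1 * G1 i j + q2 * G2 i j + q3 * G3 i j := by
      have h03 := h (eVec 0) (eVec 3)
      rw [hG1, hG2, hG3] at h03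
      have hs := hsym (eVec i) (eVec j) (eVec 0) (eVec 3)
      rw [hrow2 i j] at hs
      simp (config := { decide := true }) only [G1, G2, G3, Dv] at h03; norm_num at h03
      linarith
    have hc : c = r1 * G1 i j + r2 * G2 i j + r3 * G3 i j := by
      have h01 := h (eVec 0) (eVec 1)
      rw [hG1, hG2, hG3] at h01
      have hs := hsym (eVec i) (eVec j) (eVec 0) (eVec 1)
      rw [hrow3 i j] at hs
      simp (config := { decide := true }) only [G1, G2, G3, Dv] at h01; norm_num at h01
      linarith
    rw [h (eVec k) (eVec l), hG1, hG2, hG3, ha, hb, hc]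
  -- symmetry of the coefficient matrix
  have hs1 : p2 = q1 := by
    have hs := hsym (eVec 0) (eVec 2) (eVec 0) (eVec 3)
    rw [hrow1 0 3, hrow2 0 2] at hs
    simp (config := { decide := true }) only [G1, G2, G3, Dv] at hs; norm_num at hs
    linarith
  have hs2 : p3 = r1 := by
    have hs := hsym (eVec 0) (eVec 2) (eVec 0) (eVec 1)
    rw [hrow1 0 1, hrow3 0 2] at hs
    simp (config := { decide := true }) only [G1, G2, G3, Dv] at hs; norm_num at hs
    linarith
  have hs3 : q3 = r2 := by
    have hs := hsym (eVec 0) (eVec 3) (eVec 0) (eVec 1)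
    rw [hrow2 0 1, hrow3 0 3] at hs
    simp (config := { decide := true }) only [G1, G2, G3, Dv] at hs; norm_num at hs
    linarith
  -- six Bianchi instances
  have B1 := hbianchi (eVec 0) (eVec 1) (eVec 2) (eVec 3)
  rw [master 0 1 2 3, master 1 2 0 3, master 2 0 1 3] at B1
  simp (config := { decide := true }) only [G1, G2, G3, Dv] at B1; norm_num at B1
  have B2 := hbianchi (eVec 0) (eVec 1) (eVec 2) (eVec 4)
  rw [master 0 1 2 4, master 1 2 0 4, master 2 0 1 4] at B2
  simp (config := { decide := true }) only [G1, G2, G3, Dv] at B2; norm_num at B2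
  have B3 := hbianchi (eVec 0) (eVec 1) (eVec 2) (eVec 5)
  rw [master 0 1 2 5, master 1 2 0 5, master 2 0 1 5] at B3
  simp (config := { decide := true }) only [G1, G2, G3, Dv] at B3; norm_num at B3
  have B4 := hbianchi (eVec 0) (eVec 1) (eVec 4) (eVec 5)
  rw [master 0 1 4 5, master 1 4 0 5, master 4 0 1 5] at B4
  simp (config := { decide := true }) only [G1, G2, G3, Dv] at B4; norm_num at B4
  have B5 := hbianchi (eVec 0) (eVec 2) (eVec 3) (eVec 4)
  rw [master 0 2 3 4, master 2 3 0 4, master 3 0 2 4] at B5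
  simp (config := { decide := true }) only [G1, G2, G3, Dv] at B5; norm_num at B5
  have B6 := hbianchi (eVec 0) (eVec 2) (eVec 3) (eVec 5)
  rw [master 0 2 3 5, master 2 3 0 5, master 3 0 2 5] at B6
  simp (config := { decide := true }) only [G1, G2, G3, Dv] at B6; norm_num at B6
  have hp1 : p1 = 0 := by linarith
  have hp2 : p2 = 0 := by linarith
  have hp3 : p3 = 0 := by linarith
  have hq1 : q1 = 0 := by linarith
  have hq2 : q2 = 0 := by linarith
  have hq3 : q3 = 0 := by linarith
  have hr1 : r1 = 0 := by linarith
  have hr2 : r2 = 0 := by linarith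
  have hr3 : r3 = 0 := by linarith
  apply Module.Basis.ext_multilinear (fun _ => Pi.basisFun ℝ (Fin 8))
  intro f
  have hfe : (fun i : Fin 4 => (Pi.basisFun ℝ (Fin 8)) (f i))
      = ![eVec (f 0), eVec (f 1), eVec (f 2), eVec (f 3)] := by
    funext x
    fin_cases x <;> simp [eVec]
  rw [hfe, master (f 0) (f 1) (f 2) (f 3), hp1, hp2, hp3, hq1, hq2, hq3, hr1, hr2, hr3]
  simp


end Spin7Paper
end
end

section
/- For every 3-form T on ℝ⁸, the 8-form Σ_{i=1}^{8} (e_i⌟T) ∧ (e_i⌟(Φ∧T)) vanishes identically. -/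
open scoped BigOperators
open Matrix

noncomputable section
namespace Spin7Paper

set_option maxRecDepth 100000

/-- `wedgeF` applied: definitional unfolding. -/
lemma wedgeF_apply {p q : ℕ} (α : (Fin p → V8) → ℝ) (β : (Fin q → V8) → ℝ)
    (X : Fin (p + q) → V8) :
    wedgeF α β X = ((p.factorial * q.factorial : ℕ) : ℝ)⁻¹ *
      ∑ σ : Equiv.Perm (Fin (p + q)), ((Equiv.Perm.sign σ : ℤ) : ℝ) *
        α (fun i => X (σ (Fin.castAdd q i))) * β (fun j => X (σ (Fin.natAdd p j))) := rfl

/-- `wedgeF` vanishes on tuples with a repeated entry, for arbitrary `α`, `β`. -/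
lemma wedgeF_eq_zero_of_eq {p q : ℕ} (α : (Fin p → V8) → ℝ) (β : (Fin q → V8) → ℝ)
    (X : Fin (p + q) → V8) (a b : Fin (p + q)) (hX : X a = X b) (hab : a ≠ b) :
    wedgeF α β X = 0 := by
  have hswap : ∀ t, X (Equiv.swap a b t) = X t := by
    intro t
    rcases eq_or_ne t a with rfl | ha
    · rw [Equiv.swap_apply_left]; exact hX.symm
    rcases eq_or_ne t b with rfl | hb
    · rw [Equiv.swap_apply_right]; exact hX
    · rw [Equiv.swap_apply_of_ne_of_ne ha hb]
  have hS : ∑ σ : Equiv.Perm (Fin (p + q)), ((Equiv.Perm.sign σ : ℤ) : ℝ) *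
      α (fun i => X (σ (Fin.castAdd q i))) * β (fun j => X (σ (Fin.natAdd p j))) = 0 := by
    set f : Equiv.Perm (Fin (p + q)) → ℝ := fun σ =>
      ((Equiv.Perm.sign σ : ℤ) : ℝ) * α (fun i => X (σ (Fin.castAdd q i)))
        * β (fun j => X (σ (Fin.natAdd p j))) with hf
    have h1 : ∀ σ, f (Equiv.swap a b * σ) = - f σ := by
      intro σ
      have hsgn : ((Equiv.Perm.sign (Equiv.swap a b * σ) : ℤ) : ℝ)
          = -((Equiv.Perm.sign σ : ℤ) : ℝ) := by
        rw [Equiv.Perm.sign_mul, Equiv.Perm.sign_swap hab]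
        push_cast
        ring
      simp only [hf, Equiv.Perm.mul_apply, hswap, hsgn]
      ring
    have h2 : ∑ σ, f σ = ∑ σ, f (Equiv.swap a b * σ) :=
      (Equiv.sum_comp (Equiv.mulLeft (Equiv.swap a b)) f).symm
    have h3 : ∑ σ, f σ = - ∑ σ, f σ := by
      calc ∑ σ, f σ = ∑ σ, f (Equiv.swap a b * σ) := h2
        _ = ∑ σ, - f σ := Finset.sum_congr rfl fun σ _ => h1 σ
        _ = - ∑ σ, f σ := by rw [Finset.sum_neg_distrib]
    linarith
  rw [wedgeF_apply, hS, mul_zero]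

lemma upd_hit {r n : ℕ} [DecidableEq (Fin n)] {g : Fin r → Fin n} (hg : Function.Injective g)
    (σ : Equiv.Perm (Fin n)) {m : Fin n} {i₀ : Fin r} (h : σ (g i₀) = m)
    (X : Fin n → V8) (z : V8) :
    (fun i => Function.update X m z (σ (g i)))
      = Function.update (fun i => X (σ (g i))) i₀ z := by
  funext i
  rcases eq_or_ne i i₀ with rfl | hi
  · rw [h, Function.update_self, Function.update_self]
  · have hne : σ (g i) ≠ m := fun hc => hi (hg (σ.injective (hc.trans h.symm)))
    rw [Function.update_of_ne hne, Function.update_of_ne hi]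

lemma upd_miss {r n : ℕ} [DecidableEq (Fin n)] (g : Fin r → Fin n) (σ : Equiv.Perm (Fin n)) {m : Fin n}
    (h : ∀ j, σ (g j) ≠ m) (X : Fin n → V8) (z : V8) :
    (fun i => Function.update X m z (σ (g i))) = fun i => X (σ (g i)) := by
  funext i; rw [Function.update_of_ne (h i)]

lemma castAdd_ne_natAdd {p q : ℕ} (i : Fin p) (j : Fin q) :
    Fin.castAdd q i ≠ Fin.natAdd p j := by
  have hi := i.isLt
  intro hc
  rw [Fin.ext_iff] at hc
  simp only [Fin.coe_castAdd, Fin.coe_natAdd] at hc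
  omega

/-- location of an index relative to the `castAdd`/`natAdd` decomposition -/
lemma addCases_cases {p q : ℕ} (k : Fin (p + q)) :
    (∃ i₀ : Fin p, Fin.castAdd q i₀ = k) ∨ (∃ j₀ : Fin q, Fin.natAdd p j₀ = k) :=
  Fin.addCases (motive := fun t => (∃ i₀, Fin.castAdd q i₀ = t) ∨ (∃ j₀, Fin.natAdd p j₀ = t))
    (fun i => Or.inl ⟨i, rfl⟩) (fun j => Or.inr ⟨j, rfl⟩) k

/-- the wedge of multilinear maps is multilinear -/
def wedgeM {p q : ℕ} (α : MultilinearMap ℝ (fun _ : Fin p => V8) ℝ)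
    (β : MultilinearMap ℝ (fun _ : Fin q => V8) ℝ) :
    MultilinearMap ℝ (fun _ : Fin (p + q) => V8) ℝ where
  toFun := wedgeF ⇑α ⇑β
  map_update_add' X m x y := by
    simp only [wedgeF_apply, ← mul_add, ← Finset.sum_add_distrib]
    congr 1
    refine Finset.sum_congr rfl fun σ _ => ?_
    rcases addCases_cases (σ.symm m) with ⟨i₀, hi₀⟩ | ⟨j₀, hj₀⟩
    · have h : σ (Fin.castAdd q i₀) = m := by rw [hi₀]; exact σ.apply_symm_apply m
      have hmiss : ∀ j, σ (Fin.natAdd p j) ≠ m := fun j hc =>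
        castAdd_ne_natAdd i₀ j (σ.injective (h.trans hc.symm))
      rw [upd_hit (Fin.castAdd_injective p q) σ h X (x + y),
        upd_hit (Fin.castAdd_injective p q) σ h X x,
        upd_hit (Fin.castAdd_injective p q) σ h X y,
        upd_miss _ σ hmiss X (x + y), upd_miss _ σ hmiss X x, upd_miss _ σ hmiss X y,
        α.map_update_add]
      ring
    · have h : σ (Fin.natAdd p j₀) = m := by rw [hj₀]; exact σ.apply_symm_apply m
      have hmiss : ∀ i, σ (Fin.castAdd q i) ≠ m := fun i hc =>
        castAdd_ne_natAdd i j₀ (σ.injective (hc.trans h.symm))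
      have hnat : Function.Injective (Fin.natAdd p : Fin q → Fin (p + q)) := by
        intro a b hab
        rw [Fin.ext_iff] at hab ⊢
        simpa using hab
      rw [upd_hit hnat σ h X (x + y), upd_hit hnat σ h X x, upd_hit hnat σ h X y,
        upd_miss _ σ hmiss X (x + y), upd_miss _ σ hmiss X x, upd_miss _ σ hmiss X y,
        β.map_update_add]
      ring
  map_update_smul' X m c x := by
    simp only [wedgeF_apply, smul_eq_mul, Finset.mul_sum]
    refine Finset.sum_congr rfl fun σ _ => ?_
    rcases addCases_cases (σ.symm m) with ⟨i₀, hi₀⟩ | ⟨j₀, hj₀⟩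
    · have h : σ (Fin.castAdd q i₀) = m := by rw [hi₀]; exact σ.apply_symm_apply m
      have hmiss : ∀ j, σ (Fin.natAdd p j) ≠ m := fun j hc =>
        castAdd_ne_natAdd i₀ j (σ.injective (h.trans hc.symm))
      rw [upd_hit (Fin.castAdd_injective p q) σ h X (c • x),
        upd_hit (Fin.castAdd_injective p q) σ h X x,
        upd_miss _ σ hmiss X (c • x), upd_miss _ σ hmiss X x,
        α.map_update_smul]
      simp only [smul_eq_mul]
      ring
    · have h : σ (Fin.natAdd p j₀) = m := by rw [hj₀]; exact σ.apply_symm_apply m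
      have hmiss : ∀ i, σ (Fin.castAdd q i) ≠ m := fun i hc =>
        castAdd_ne_natAdd i j₀ (σ.injective (hc.trans h.symm))
      have hnat : Function.Injective (Fin.natAdd p : Fin q → Fin (p + q)) := by
        intro a b hab
        rw [Fin.ext_iff] at hab ⊢
        simpa using hab
      rw [upd_hit hnat σ h X (c • x), upd_hit hnat σ h X x,
        upd_miss _ σ hmiss X (c • x), upd_miss _ σ hmiss X x,
        β.map_update_smul]
      simp only [smul_eq_mul]
      ring

@[simp] lemma wedgeM_coe {p q : ℕ} (α : MultilinearMap ℝ (fun _ : Fin p => V8) ℝ)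
    (β : MultilinearMap ℝ (fun _ : Fin q => V8) ℝ) :
    ⇑(wedgeM α β) = wedgeF ⇑α ⇑β := rfl

lemma curry_cons_update {k : ℕ} [DecidableEq (Fin k)] (x : V8) (Y : Fin k → V8)
    (m : Fin k) (z : V8) :
    (Fin.cons x (Function.update Y m z) : Fin (k + 1) → V8)
      = Function.update (Fin.cons x Y : Fin (k + 1) → V8) m.succ z := by
  funext t
  refine Fin.cases ?_ ?_ t
  · rw [Fin.cons_zero, Function.update_of_ne (Fin.succ_ne_zero m).symm, Fin.cons_zero]
  · intro j
    rcases eq_or_ne j m with rfl | hj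
    · rw [Fin.cons_succ, Function.update_self, Function.update_self]
    · rw [Fin.cons_succ, Function.update_of_ne hj,
        Function.update_of_ne (fun hc => hj (Fin.succ_injective _ hc)), Fin.cons_succ]

/-- contraction of a multilinear map is multilinear -/
def curryM {k : ℕ} (f : MultilinearMap ℝ (fun _ : Fin (k + 1) => V8) ℝ) (x : V8) :
    MultilinearMap ℝ (fun _ : Fin k => V8) ℝ where
  toFun Y := f (Fin.cons x Y)
  map_update_add' Y m a b := by
    beta_reduce
    rw [curry_cons_update x Y m, curry_cons_update x Y m, curry_cons_update x Y m]
    exact f.map_update_add _ _ _ _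
  map_update_smul' Y m c a := by
    beta_reduce
    rw [curry_cons_update x Y m, curry_cons_update x Y m]
    exact f.map_update_smul _ _ _ _

@[simp] lemma curryM_coe {k : ℕ} (f : MultilinearMap ℝ (fun _ : Fin (k + 1) => V8) ℝ)
    (x : V8) : ⇑(curryM f x) = contrF x ⇑f := rfl

/-- the wedge of multilinear maps, as an alternating map -/
def wedgeA {p q : ℕ} (α : MultilinearMap ℝ (fun _ : Fin p => V8) ℝ)
    (β : MultilinearMap ℝ (fun _ : Fin q => V8) ℝ) : AltForm (p + q) :=
  { wedgeM α β with
    map_eq_zero_of_eq' := fun X a b hX hab => wedgeF_eq_zero_of_eq ⇑α ⇑β X a b hX hab }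

@[simp] lemma wedgeA_coe {p q : ℕ} (α : MultilinearMap ℝ (fun _ : Fin p => V8) ℝ)
    (β : MultilinearMap ℝ (fun _ : Fin q => V8) ℝ) :
    ⇑(wedgeA α β) = wedgeF ⇑α ⇑β := rfl

lemma altSum_apply {k : ℕ} (f : Fin 8 → AltForm k) (X : Fin k → V8) :
    (∑ i, f i) X = ∑ i, f i X := by
  classical
  induction (Finset.univ : Finset (Fin 8)) using Finset.induction with
  | empty => simp
  | @insert a s h ih => rw [Finset.sum_insert h, Finset.sum_insert h, AlternatingMap.add_apply, ih]

/-- key computation: each summand vanishes on injective basis tuples -/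
lemma key (T : AltForm 3) (i : Fin 8) (v : Fin 8 → Fin 8) (hv : Function.Injective v) :
    wedgeF (p := 2) (q := 6) (contrF (eVec i) ⇑T)
      (contrF (p := 6) (eVec i) (wedgeF (p := 4) (q := 3) ⇑Phi ⇑T))
      (fun k => eVec (v k)) = 0 := by
  have hsurj : Function.Surjective v := Finite.surjective_of_injective hv
  have hz : ∀ σ : Equiv.Perm (Fin (2 + 6)),
      ((Equiv.Perm.sign σ : ℤ) : ℝ)
          * contrF (eVec i) ⇑T (fun a => eVec (v (σ (Fin.castAdd 6 a))))
          * contrF (p := 6) (eVec i) (wedgeF (p := 4) (q := 3) ⇑Phi ⇑T)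
              (fun b => eVec (v (σ (Fin.natAdd 2 b)))) = 0 := by
    intro σ
    obtain ⟨k0, hk0⟩ := hsurj i
    have hk : v (σ (σ.symm k0)) = i := by rw [σ.apply_symm_apply]; exact hk0
    rcases addCases_cases (σ.symm k0) with ⟨a₀, ha⟩ | ⟨b₀, hb⟩
    · have hvi : v (σ (Fin.castAdd 6 a₀)) = i := by rw [ha]; exact hk
      have hT : contrF (eVec i) ⇑T (fun a => eVec (v (σ (Fin.castAdd 6 a)))) = 0 := by
        show T (Fin.cons (eVec i) (fun a => eVec (v (σ (Fin.castAdd 6 a))))) = 0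
        refine T.map_eq_zero_of_eq _ (i := 0) (j := a₀.succ) ?_ (Fin.succ_ne_zero a₀).symm
        rw [Fin.cons_zero, Fin.cons_succ, hvi]
      rw [hT, mul_zero, zero_mul]
    · have hvi : v (σ (Fin.natAdd 2 b₀)) = i := by rw [hb]; exact hk
      have hB : contrF (p := 6) (eVec i) (wedgeF (p := 4) (q := 3) ⇑Phi ⇑T)
          (fun b => eVec (v (σ (Fin.natAdd 2 b)))) = 0 := by
        show wedgeF (p := 4) (q := 3) ⇑Phi ⇑T
          (Fin.cons (eVec i) (fun b => eVec (v (σ (Fin.natAdd 2 b))))) = 0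
        refine wedgeF_eq_zero_of_eq _ _ _ 0 b₀.succ ?_ (Fin.succ_ne_zero b₀).symm
        rw [Fin.cons_zero, Fin.cons_succ, hvi]
      rw [hB, mul_zero]
  rw [wedgeF_apply]
  rw [Finset.sum_eq_zero fun σ _ => hz σ, mul_zero]

/-- the whole sum, as an alternating 8-form -/
def FAlt (T : AltForm 3) : AltForm 8 :=
  ∑ i : Fin 8, wedgeA (p := 2) (q := 6) (curryM (k := 2) T.toMultilinearMap (eVec i))
    (curryM (k := 6) (wedgeM (p := 4) (q := 3) Phi.toMultilinearMap T.toMultilinearMap)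
      (eVec i))

lemma FAlt_eq_zero (T : AltForm 3) : FAlt T = 0 := by
  apply Module.Basis.ext_alternating (Pi.basisFun ℝ (Fin 8))
  intro v hv
  have hbasis : (fun i => (Pi.basisFun ℝ (Fin 8)) (v i)) = fun i => eVec (v i) := by
    funext i
    rw [Pi.basisFun_apply]
    rfl
  rw [hbasis, AlternatingMap.zero_apply, FAlt, altSum_apply]
  exact Finset.sum_eq_zero fun i _ => key T i v hv

/-- Σᵢ (eᵢ⌟T) ∧ (eᵢ⌟(Φ∧T)) = 0 for every 3-form T. -/
theorem statement9 (T : AltForm 3) (X : Fin 8 → V8) :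
    ∑ i, wedgeF (p := 2) (q := 6) (contrF (eVec i) ⇑T)
      (contrF (p := 6) (eVec i) (wedgeF (p := 4) (q := 3) ⇑Phi ⇑T)) X = 0 := by
  have h : (FAlt T) X = ∑ i, wedgeF (p := 2) (q := 6) (contrF (eVec i) ⇑T)
      (contrF (p := 6) (eVec i) (wedgeF (p := 4) (q := 3) ⇑Phi ⇑T)) X := by
    rw [FAlt, altSum_apply]
    rfl
  rw [← h, FAlt_eq_zero, AlternatingMap.zero_apply]

end Spin7Paper
end
end
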